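/- Let R be a Noetherian local ring (or finitely generated graded K-algebra with R₀ = K and maximal homogeneous ideal R₊) and I ⊆ R a proper (homogeneous) ideal. Then depth R ≤ depth(I,R) + dim(R/I). In particular dim R − depth R ≥ height I − depth(I,R). -/

import Mathlib

set_option linter.unusedSectionVars false


open RingTheory.Sequence

section Aux

open Submodule IsLocalRing Pointwise

universe u v

variable {R : Type u} [CommRing R]

lemma RD.wreg_of_subsingleton (M : Type v) [AddCommGroup M] [Module R M] [Subsingleton M]
    (ls : List R) : IsWeaklyRegular M ls :=
  ⟨fun i h => by
    have : Subsingleton (M ⧸ (Ideal.ofList (ls.take i) • ⊤ : Submodule R M)) :=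
      (Submodule.mkQ_surjective _).subsingleton
    exact Function.injective_of_subsingleton _⟩

lemma RD.assoc_old [IsNoetherianRing R] {I : Ideal R} {M : Type v} [AddCommGroup M]
    [Module R M] :
    IsAssociatedPrime I M ↔ I.IsPrime ∧ ∃ x : M, I = (Submodule.span R {x}).annihilator := by
  rw [isAssociatedPrime_iff]
  have : ∀ x : M, (⊥ : Submodule R M).colon {x} = (Submodule.span R {x}).annihilator := by
    intro x; ext a
    rw [Submodule.mem_colon_singleton, Submodule.mem_bot, Submodule.mem_annihilator_span_singleton]
  simp only [this]

/-- Associated primes of a module are among those of a submodule and the quotient. -/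
lemma RD.assoc_subset_union [IsNoetherianRing R] {M : Type v} [AddCommGroup M] [Module R M] (P : Submodule R M) :
    associatedPrimes R M ⊆ associatedPrimes R P ∪ associatedPrimes R (M ⧸ P) := by
  rintro q hq0
  obtain ⟨hq, z, rfl⟩ := RD.assoc_old.mp hq0
  by_cases hcase : ∃ b : R, b • z ∈ P ∧ b • z ≠ 0
  · obtain ⟨b, hbP, hb0⟩ := hcase
    left
    have hbq : b ∉ (Submodule.span R {z}).annihilator := by
      rw [Submodule.mem_annihilator_span_singleton]; exact hb0
    refine RD.assoc_old.mpr ⟨hq, ⟨b • z, hbP⟩, ?_⟩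
    ext a
    rw [Submodule.mem_annihilator_span_singleton, Submodule.mem_annihilator_span_singleton]
    rw [show ∀ (x : P), (x = 0 ↔ (x : M) = 0) from fun x => ZeroMemClass.coe_eq_zero.symm]
    simp only [SetLike.val_smul]
    constructor
    · intro ha
      have : a • b • z = b • a • z := smul_comm a b z
      rw [this, ha, smul_zero]
    · intro ha
      rw [smul_smul] at ha
      have hab : a * b ∈ (Submodule.span R {z}).annihilator := by
        rw [Submodule.mem_annihilator_span_singleton]; exact ha
      rcases hq.mem_or_mem hab with h | h
      · rwa [Submodule.mem_annihilator_span_singleton] at h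
      · exact absurd h hbq
  · right
    push_neg at hcase
    refine RD.assoc_old.mpr ⟨hq, P.mkQ z, ?_⟩
    ext a
    rw [Submodule.mem_annihilator_span_singleton, Submodule.mem_annihilator_span_singleton]
    constructor
    · intro ha
      rw [← map_smul, ha, map_zero]
    · intro ha
      rw [← map_smul] at ha
      exact hcase _ ((Submodule.Quotient.mk_eq_zero P).mp ha)

lemma RD.assoc_span_singleton_subset [IsNoetherianRing R] {M : Type v} [AddCommGroup M] [Module R M] (z : M)
    (hq : ((Submodule.span R {z}).annihilator).IsPrime) :
    associatedPrimes R (Submodule.span R {z} : Submodule R M)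
      ⊆ {(Submodule.span R {z}).annihilator} := by
  rintro q hq0
  obtain ⟨hq', w, rfl⟩ := RD.assoc_old.mp hq0
  obtain ⟨w, hw⟩ := w
  obtain ⟨b, rfl⟩ := Submodule.mem_span_singleton.mp hw
  have hbz : b • z ≠ 0 := by
    rintro h
    apply hq'.ne_top
    rw [Ideal.eq_top_iff_one, Submodule.mem_annihilator_span_singleton, one_smul,
      Subtype.ext_iff]
    simpa using h
  have hb : b ∉ (Submodule.span R {z}).annihilator := by
    rw [Submodule.mem_annihilator_span_singleton]; exact hbz
  have : (Submodule.span R {(⟨b • z, hw⟩ : Submodule.span R ({z} : Set M))}).annihilator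
      = (Submodule.span R {z}).annihilator := by
    ext a
    rw [Submodule.mem_annihilator_span_singleton, Submodule.mem_annihilator_span_singleton]
    rw [show ∀ (x : Submodule.span R ({z} : Set M)), (x = 0 ↔ (x : M) = 0) from
      fun x => ZeroMemClass.coe_eq_zero.symm]
    simp only [SetLike.val_smul]
    rw [smul_smul]
    constructor
    · intro ha
      have hab : a * b ∈ (Submodule.span R {z}).annihilator := by
        rw [Submodule.mem_annihilator_span_singleton]; exact ha
      rcases hq.mem_or_mem hab with h | h
      · rwa [Submodule.mem_annihilator_span_singleton] at h
      · exact absurd h hb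
    · intro ha
      rw [mul_smul, smul_comm, ha, smul_zero]
  simp only [Set.mem_singleton_iff, this]

lemma RD.associatedPrimes_finite [IsNoetherianRing R] (M : Type v) [AddCommGroup M] [Module R M]
    [Module.Finite R M] : (associatedPrimes R M).Finite := by
  have hNoeth : IsNoetherian R M := isNoetherian_of_isNoetherianRing_of_finite R M
  have key : ∀ N : Submodule R M, (associatedPrimes R (M ⧸ N)).Finite := by
    intro N
    induction N using IsNoetherian.induction with
    | _ N ih =>
      by_cases hs : Subsingleton (M ⧸ N)
      · rw [associatedPrimes.eq_empty_of_subsingleton]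
        exact Set.finite_empty
      have : Nontrivial (M ⧸ N) := not_subsingleton_iff_nontrivial.mp hs
      obtain ⟨p, hp⟩ := associatedPrimes.nonempty R (M ⧸ N)
      obtain ⟨hp1, z, hz⟩ := RD.assoc_old.mp hp
      have hz0 : z ≠ 0 := by
        rintro rfl
        apply hp1.ne_top
        rw [hz, Ideal.eq_top_iff_one, Submodule.mem_annihilator_span_singleton, one_smul]
      set N' : Submodule R M := Submodule.comap N.mkQ (Submodule.span R {z}) with hN'def
      have hle : N ≤ N' := by
        intro x hx
        rw [hN'def, Submodule.mem_comap]
        convert Submodule.zero_mem _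
        rw [Submodule.mkQ_apply]
        rwa [Submodule.Quotient.mk_eq_zero]
      have hNN' : N < N' := by
        refine lt_of_le_of_ne hle ?_
        intro heq
        obtain ⟨z₀, rfl⟩ := Submodule.mkQ_surjective N z
        have hmem : z₀ ∈ N' := by
          rw [hN'def, Submodule.mem_comap]
          exact Submodule.mem_span_singleton_self _
        rw [← heq] at hmem
        exact hz0 ((Submodule.Quotient.mk_eq_zero N).mpr hmem)
      have hfin := ih N' hNN'
      have hmapeq : Submodule.map N.mkQ N' = Submodule.span R {z} :=
        Submodule.map_comap_eq_of_surjective (Submodule.mkQ_surjective N) _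
      have e : ((M ⧸ N) ⧸ (Submodule.map N.mkQ N')) ≃ₗ[R] M ⧸ N' :=
        Submodule.quotientQuotientEquivQuotient N N' hNN'.le
      have hsub := RD.assoc_subset_union (Submodule.span R {z} : Submodule R (M ⧸ N))
      have h1 : associatedPrimes R (Submodule.span R {z} : Submodule R (M ⧸ N)) ⊆ {p} := by
        rw [hz]
        exact RD.assoc_span_singleton_subset z (hz ▸ hp1)
      have h2 : associatedPrimes R ((M ⧸ N) ⧸ (Submodule.span R {z} : Submodule R (M ⧸ N)))
          = associatedPrimes R (M ⧸ N') := by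
        rw [← hmapeq]
        exact LinearEquiv.AssociatedPrimes.eq e
      apply Set.Finite.subset (Set.Finite.union (Set.finite_singleton p) hfin)
      intro q hqmem
      rcases hsub hqmem with h | h
      · exact Or.inl (h1 h)
      · exact Or.inr (h2 ▸ h)
  have e := Submodule.quotEquivOfEqBot (⊥ : Submodule R M) rfl
  rw [← LinearEquiv.AssociatedPrimes.eq e]
  exact key ⊥

end Aux

section Aux2

open Submodule IsLocalRing Pointwise

universe u v

variable {R : Type u} [CommRing R] [IsNoetherianRing R]

lemma RD.isSMulRegular_of_notmem_assoc {M : Type v} [AddCommGroup M] [Module R M]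
    {t : R} (ht : ∀ p ∈ associatedPrimes R M, t ∉ p) : IsSMulRegular M t := by
  intro x₁ x₂ hx
  by_contra hne
  simp only at hx
  have hz : t • (x₁ - x₂) = 0 := by
    rw [smul_sub, hx, sub_self]
  have : t ∈ ⋃ p ∈ associatedPrimes R M, (p : Set R) := by
    rw [biUnion_associatedPrimes_eq_zero_divisors]
    exact ⟨x₁ - x₂, sub_ne_zero.mpr hne, hz⟩
  obtain ⟨S, ⟨p, rfl⟩, hS⟩ := this
  simp only [Set.mem_iUnion, SetLike.mem_coe, exists_prop] at hS
  exact ht p hS.1 hS.2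

lemma RD.mem_assoc_of_not_isSMulRegular {M : Type v} [AddCommGroup M] [Module R M]
    {t : R} (ht : ¬ IsSMulRegular M t) : ∃ p ∈ associatedPrimes R M, t ∈ p := by
  rw [IsSMulRegular, Function.not_injective_iff] at ht
  obtain ⟨a, b, hab, hne⟩ := ht
  have : t ∈ ⋃ p ∈ associatedPrimes R M, (p : Set R) := by
    rw [biUnion_associatedPrimes_eq_zero_divisors]
    exact ⟨a - b, sub_ne_zero.mpr hne, by rw [smul_sub, hab, sub_self]⟩
  obtain ⟨S, ⟨p, rfl⟩, hS⟩ := this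
  simp only [Set.mem_iUnion, SetLike.mem_coe, exists_prop] at hS
  exact ⟨p, hS.1, hS.2⟩

omit [IsNoetherianRing R] in
/-- Prime avoidance applied to a finite set of primes. -/
lemma RD.exists_mem_notmem_primes {S : Set (Ideal R)} (hfin : S.Finite)
    (hprime : ∀ p ∈ S, p.IsPrime) (J : Ideal R) (hJ : ∀ p ∈ S, ¬ J ≤ p) :
    ∃ t ∈ J, ∀ p ∈ S, t ∉ p := by
  by_contra hcon
  push_neg at hcon
  have hsub : (J : Set R) ⊆ ⋃ p ∈ hfin.toFinset, ((id p : Ideal R) : Set R) := by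
    intro x hx
    obtain ⟨p, hpS, hxp⟩ := hcon x hx
    exact Set.mem_biUnion (hfin.mem_toFinset.mpr hpS) hxp
  have := (Ideal.subset_union_prime (⊤ : Ideal R) (⊤ : Ideal R)
    (fun i hi _ _ => hprime i (hfin.mem_toFinset.mp hi))).mp hsub
  obtain ⟨p, hpS, hle⟩ := this
  exact hJ p (hfin.mem_toFinset.mp hpS) hle

/-- In a local ring, find an element of the maximal ideal regular on two modules at once. -/
lemma RD.exists_simul_regular [IsLocalRing R] (M₁ : Type v) (M₂ : Type v)
    [AddCommGroup M₁] [Module R M₁] [Module.Finite R M₁]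
    [AddCommGroup M₂] [Module R M₂] [Module.Finite R M₂]
    (h1 : maximalIdeal R ∉ associatedPrimes R M₁)
    (h2 : maximalIdeal R ∉ associatedPrimes R M₂) :
    ∃ t ∈ maximalIdeal R, IsSMulRegular M₁ t ∧ IsSMulRegular M₂ t := by
  have hfin : (associatedPrimes R M₁ ∪ associatedPrimes R M₂).Finite :=
    (RD.associatedPrimes_finite M₁).union (RD.associatedPrimes_finite M₂)
  have hprime : ∀ p ∈ associatedPrimes R M₁ ∪ associatedPrimes R M₂, p.IsPrime := by
    rintro p (hp | hp) <;> exact hp.isPrime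
  have hJ : ∀ p ∈ associatedPrimes R M₁ ∪ associatedPrimes R M₂, ¬ maximalIdeal R ≤ p := by
    rintro p hp hle
    have : p = maximalIdeal R :=
      le_antisymm (le_maximalIdeal (hprime p hp).ne_top) hle
    rcases hp with hp | hp
    · exact h1 (this ▸ hp)
    · exact h2 (this ▸ hp)
  obtain ⟨t, htm, ht⟩ := RD.exists_mem_notmem_primes hfin hprime _ hJ
  exact ⟨t, htm, RD.isSMulRegular_of_notmem_assoc (fun p hp => ht p (Or.inl hp)),
    RD.isSMulRegular_of_notmem_assoc (fun p hp => ht p (Or.inr hp))⟩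

end Aux2

section Isch

open Submodule IsLocalRing Pointwise

universe u v

variable {R : Type u} [CommRing R] [IsNoetherianRing R] [IsLocalRing R]

/-- Ischebeck-type lemma: if `M` admits a weakly regular sequence of length `n` inside the
maximal ideal and the prime `p` annihilates a nonzero element of `M`, then the coheight
of `p` is at least `n`. -/
lemma RD.ischebeck : ∀ (n : ℕ) (M : Type v) [AddCommGroup M] [Module R M] [Module.Finite R M]
    (rs : List R), rs.length = n → (∀ r ∈ rs, r ∈ maximalIdeal R) → IsWeaklyRegular M rs →
    ∀ (p : Ideal R) (hp : p.IsPrime) (z : M), z ≠ 0 → (∀ a ∈ p, a • z = 0) →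
    (n : ℕ∞) ≤ Order.coheight (⟨p, hp⟩ : PrimeSpectrum R) := by
  intro n
  induction n with
  | zero => intro M _ _ _ rs _ _ _ p hp z hz hpz; simp
  | succ n ih =>
    intro M _ _ _ rs hlen hmem hreg p hp z hz hpz
    have hNoeth : IsNoetherian R M := isNoetherian_of_isNoetherianRing_of_finite R M
    obtain ⟨x, rest, rfl⟩ : ∃ x rest, rs = x :: rest := by
      cases rs with
      | nil => simp at hlen
      | cons x rest => exact ⟨x, rest, rfl⟩
    rw [isWeaklyRegular_cons_iff] at hreg
    obtain ⟨hx, hrest⟩ := hreg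
    have hxm : x ∈ maximalIdeal R := hmem x List.mem_cons_self
    -- the p-torsion submodule
    set K : Submodule R M :=
      { carrier := {w | ∀ a ∈ p, a • w = 0},
        add_mem' := fun h1 h2 => by
          intro a ha
          rw [smul_add, h1 a ha, h2 a ha, add_zero]
        zero_mem' := fun a ha => smul_zero a,
        smul_mem' := fun c w hw => by
          intro a ha
          rw [smul_comm, hw a ha, smul_zero] } with hKdef
    have hzK : z ∈ K := hpz
    have hKbot : K ≠ ⊥ := fun h => hz (by rwa [h, Submodule.mem_bot] at hzK)
    -- there is w ∈ K not in xM
    have hw : ∃ w ∈ K, w ∉ x • (⊤ : Submodule R M) := by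
      by_contra hcon
      push_neg at hcon
      apply hKbot
      apply Submodule.eq_bot_of_le_smul_of_le_jacobson_bot (maximalIdeal R) K
        (IsNoetherian.noetherian K)
      · intro w hwK
        obtain ⟨u, -, rfl⟩ : ∃ u ∈ ((⊤ : Submodule R M) : Set M), x • u = w :=
          Set.mem_smul_set.mp (hcon w hwK)
        have huK : u ∈ K := by
          intro a ha
          apply hx
          simp only
          rw [smul_comm, hwK a ha, smul_zero]
        exact Submodule.smul_mem_smul hxm huK
      · rw [IsLocalRing.jacobson_eq_maximalIdeal ⊥ bot_ne_top]
    obtain ⟨w, hwK, hwx⟩ := hw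
    -- pass to the quotient
    set w' : QuotSMulTop x M := Submodule.Quotient.mk w with hw'def
    have hw'0 : w' ≠ 0 := fun h => hwx ((Submodule.Quotient.mk_eq_zero _).mp h)
    obtain ⟨P, hP, hPle⟩ := exists_le_isAssociatedPrime_of_isNoetherianRing R w' hw'0
    obtain ⟨hPprime, y, hPy⟩ := RD.assoc_old.mp hP
    have hy0 : y ≠ 0 := by
      rintro rfl
      apply hPprime.ne_top
      rw [hPy, Ideal.eq_top_iff_one, Submodule.mem_annihilator_span_singleton, one_smul]
    have hPy' : ∀ a ∈ P, a • y = 0 := by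
      intro a ha
      rw [hPy, Submodule.mem_annihilator_span_singleton] at ha
      exact ha
    have hpP : p ≤ P := by
      intro a ha
      apply hPle
      rw [Submodule.mem_colon_singleton, Submodule.mem_bot, hw'def, ← Submodule.Quotient.mk_smul,
        Submodule.Quotient.mk_eq_zero]
      rw [hwK a ha]
      exact Submodule.zero_mem _
    have hxP : x ∈ P := by
      apply hPle
      rw [Submodule.mem_colon_singleton, Submodule.mem_bot, hw'def, ← Submodule.Quotient.mk_smul,
        Submodule.Quotient.mk_eq_zero]
      exact Submodule.smul_mem_pointwise_smul w x ⊤ Submodule.mem_top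
    have hxp : x ∉ p := by
      intro hxp
      exact hz (hx (by simp only; rw [hpz x hxp, smul_zero]))
    have hlt : (⟨p, hp⟩ : PrimeSpectrum R) < ⟨P, hPprime⟩ := by
      refine lt_of_le_of_ne hpP ?_
      intro heq
      have : p = P := congrArg PrimeSpectrum.asIdeal heq
      exact hxp (this ▸ hxP)
    have hihP : (n : ℕ∞) ≤ Order.coheight (⟨P, hPprime⟩ : PrimeSpectrum R) :=
      ih (QuotSMulTop x M) rest (by simpa using hlen)
        (fun r hr => hmem r (List.mem_cons_of_mem x hr)) hrest P hPprime y hy0 hPy'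
    calc ((n + 1 : ℕ) : ℕ∞) = (n : ℕ∞) + 1 := by push_cast; ring
      _ ≤ Order.coheight (⟨P, hPprime⟩ : PrimeSpectrum R) + 1 := by
          exact add_le_add_left hihP 1
      _ ≤ Order.coheight (⟨p, hp⟩ : PrimeSpectrum R) := by
          conv_rhs => rw [Order.coheight_eq_iSup_gt_coheight]
          exact le_iSup₂ (f := fun y (_ : y > (⟨p, hp⟩ : PrimeSpectrum R)) =>
            Order.coheight y + 1) (⟨P, hPprime⟩ : PrimeSpectrum R) hlt

end Isch

section Exchange

open Submodule IsLocalRing Pointwise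

universe u v

variable {R : Type u} [CommRing R] [IsNoetherianRing R] [IsLocalRing R]

/-- If the maximal ideal is an associated prime of `QuotSMulTop c M` where `c` is `M`-regular,
then `M` admits no weakly regular sequence of length 2 in the maximal ideal. -/
lemma RD.not_assoc_quot {M : Type v} [AddCommGroup M] [Module R M]
    {a₀ a₁ c : R} (ha₀m : a₀ ∈ maximalIdeal R) (ha₁m : a₁ ∈ maximalIdeal R)
    (ha₀ : IsSMulRegular M a₀) (ha₁ : IsSMulRegular (QuotSMulTop a₀ M) a₁)
    (hc : IsSMulRegular M c) :
    maximalIdeal R ∉ associatedPrimes R (QuotSMulTop c M) := by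
  intro hm0
  obtain ⟨-, w', hm⟩ := RD.assoc_old.mp hm0
  obtain ⟨w, rfl⟩ := Submodule.mkQ_surjective _ w'
  have hw0 : w ∉ c • (⊤ : Submodule R M) := by
    intro hmem
    apply (IsLocalRing.maximalIdeal.isMaximal R).ne_top
    rw [hm, Ideal.eq_top_iff_one, Submodule.mem_annihilator_span_singleton, one_smul,
      Submodule.mkQ_apply, Submodule.Quotient.mk_eq_zero]
    exact hmem
  have hmw : ∀ a ∈ maximalIdeal R, a • w ∈ c • (⊤ : Submodule R M) := by
    intro a ha
    rw [hm, Submodule.mem_annihilator_span_singleton, Submodule.mkQ_apply,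
      ← Submodule.Quotient.mk_smul, Submodule.Quotient.mk_eq_zero] at ha
    exact ha
  obtain ⟨v, -, hv⟩ : ∃ v ∈ ((⊤ : Submodule R M) : Set M), c • v = a₀ • w :=
    Set.mem_smul_set.mp (hmw a₀ ha₀m)
  have hvn : v ∉ a₀ • (⊤ : Submodule R M) := by
    intro hmem
    obtain ⟨s, -, hs⟩ : ∃ s ∈ ((⊤ : Submodule R M) : Set M), a₀ • s = v :=
      Set.mem_smul_set.mp hmem
    apply hw0
    have : a₀ • (c • s) = a₀ • w := by
      rw [smul_comm, hs, hv]
    have hws : w = c • s := (ha₀ this).symm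
    rw [hws]
    exact Set.smul_mem_smul_set (Submodule.mem_top)
  have hmv : ∀ a ∈ maximalIdeal R, a • v ∈ a₀ • (⊤ : Submodule R M) := by
    intro a ha
    obtain ⟨u, -, hu⟩ : ∃ u ∈ ((⊤ : Submodule R M) : Set M), c • u = a • w :=
      Set.mem_smul_set.mp (hmw a ha)
    have : c • (a • v) = c • (a₀ • u) := by
      rw [smul_comm c a₀ u, hu, smul_comm a₀ a w, ← hv, smul_comm a c v]
    have hav : a • v = a₀ • u := hc this
    rw [hav]
    exact Set.smul_mem_smul_set (Submodule.mem_top)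
  set v' : QuotSMulTop a₀ M := Submodule.Quotient.mk v with hv'def
  have hv'0 : v' ≠ 0 := fun h => hvn ((Submodule.Quotient.mk_eq_zero _).mp h)
  apply hv'0
  apply ha₁
  show a₁ • v' = a₁ • 0
  rw [smul_zero, hv'def, ← Submodule.Quotient.mk_smul, Submodule.Quotient.mk_eq_zero]
  exact hmv a₁ ha₁m

/-- The Rees-type exchange lemma: if `M` has a weakly regular sequence of length `n+1` inside
the maximal ideal and `c` in the maximal ideal is `M`-regular, then `c` extends to a weakly
regular sequence of length `n+1` starting with `c`. -/
lemma RD.exchange : ∀ (n : ℕ) (M : Type v) [AddCommGroup M] [Module R M] [Module.Finite R M]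
    (as : List R), as.length = n + 1 → (∀ r ∈ as, r ∈ maximalIdeal R) →
    IsWeaklyRegular M as →
    ∀ (c : R), c ∈ maximalIdeal R → IsSMulRegular M c →
    ∃ zs : List R, zs.length = n ∧ (∀ r ∈ zs, r ∈ maximalIdeal R) ∧
      IsWeaklyRegular M (c :: zs) := by
  intro n
  induction n with
  | zero =>
    intro M _ _ _ as _ _ _ c _ hc
    exact ⟨[], rfl, by simp, (isWeaklyRegular_singleton_iff M c).mpr hc⟩
  | succ n ih =>
    intro M _ _ _ as hlen hmem hreg c hcm hc
    have hNoeth : IsNoetherian R M := isNoetherian_of_isNoetherianRing_of_finite R M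
    by_cases hss : Subsingleton (QuotSMulTop c M)
    · refine ⟨List.replicate (n + 1) 0, List.length_replicate, ?_, ?_⟩
      · intro r hr
        rw [List.eq_of_mem_replicate hr]
        exact zero_mem _
      · rw [isWeaklyRegular_cons_iff]
        exact ⟨hc, RD.wreg_of_subsingleton _ _⟩
    obtain ⟨a₀, a₁, rest, rfl⟩ : ∃ a₀ a₁ rest, as = a₀ :: a₁ :: rest := by
      match as, hlen with
      | a₀ :: a₁ :: rest, _ => exact ⟨a₀, a₁, rest, rfl⟩
    have ha₀m := hmem a₀ (by simp)
    have ha₁m := hmem a₁ (by simp)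
    rw [isWeaklyRegular_cons_iff] at hreg
    obtain ⟨ha₀, hreg'⟩ := hreg
    have ha₁ : IsSMulRegular (QuotSMulTop a₀ M) a₁ :=
      ((isWeaklyRegular_cons_iff _ _ _).mp hreg').1
    -- claim 1 : m ∉ Ass (M/cM)
    have claim1 : maximalIdeal R ∉ associatedPrimes R (QuotSMulTop c M) :=
      RD.not_assoc_quot ha₀m ha₁m ha₀ ha₁ hc
    -- split off the last element of as
    have hne : (a₀ :: a₁ :: rest) ≠ [] := by simp
    set ys := (a₀ :: a₁ :: rest).dropLast with hysdef
    set b := (a₀ :: a₁ :: rest).getLast hne with hbdef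
    have hsplit : ys ++ [b] = a₀ :: a₁ :: rest := List.dropLast_append_getLast hne
    have hyslen : ys.length = n + 1 := by
      have := congrArg List.length hsplit
      simp at this
      simp at hlen
      omega
    have hysmem : ∀ r ∈ ys, r ∈ maximalIdeal R := fun r hr =>
      hmem r (by rw [← hsplit]; exact List.mem_append_left _ hr)
    have hbm : b ∈ maximalIdeal R := hmem b (by rw [← hsplit]; simp)
    have hys_wreg : IsWeaklyRegular M ys ∧
        IsWeaklyRegular (M ⧸ (Ideal.ofList ys • ⊤ : Submodule R M)) [b] := by
      rw [← isWeaklyRegular_append_iff, hsplit]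
      rw [isWeaklyRegular_cons_iff]
      exact ⟨ha₀, hreg'⟩
    have hb : IsSMulRegular (M ⧸ (Ideal.ofList ys • ⊤ : Submodule R M)) b :=
      (isWeaklyRegular_singleton_iff _ _).mp hys_wreg.2
    -- claim 2 : m ∉ Ass (M / ys M)
    have claim2 : maximalIdeal R ∉
        associatedPrimes R (M ⧸ (Ideal.ofList ys • ⊤ : Submodule R M)) := by
      intro hm0
      obtain ⟨-, w, hm⟩ := RD.assoc_old.mp hm0
      have hw0 : w ≠ 0 := by
        intro h
        apply (IsLocalRing.maximalIdeal.isMaximal R).ne_top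
        rw [hm, h, Ideal.eq_top_iff_one, Submodule.mem_annihilator_span_singleton, one_smul]
      apply hw0
      apply hb
      show b • w = b • 0
      rw [smul_zero]
      have : b ∈ (Submodule.span R {w}).annihilator := hm ▸ hbm
      rwa [Submodule.mem_annihilator_span_singleton] at this
    -- choose t regular on both
    obtain ⟨t, htm, ht1, ht2⟩ := RD.exists_simul_regular (QuotSMulTop c M)
      (M ⧸ (Ideal.ofList ys • ⊤ : Submodule R M)) claim1 claim2
    -- ys ++ [t] is weakly regular on M
    have hbs : IsWeaklyRegular M (ys ++ [t]) := by
      rw [isWeaklyRegular_append_iff]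
      exact ⟨hys_wreg.1, (isWeaklyRegular_singleton_iff _ _).mpr ht2⟩
    have hbsmem : ∀ r ∈ ys ++ [t], r ∈ maximalIdeal R := by
      intro r hr
      rcases List.mem_append.mp hr with h | h
      · exact hysmem r h
      · rw [List.mem_singleton.mp h]; exact htm
    -- permute to t :: ys
    have hperm : (ys ++ [t]).Perm (t :: ys) := by
      simpa using List.perm_middle (a := t) (l₁ := ys) (l₂ := [])
    have htys : IsWeaklyRegular M (t :: ys) :=
      IsLocalRing.isWeaklyRegular_of_perm_of_subset_maximalIdeal hbs hperm hbsmem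
    rw [isWeaklyRegular_cons_iff] at htys
    obtain ⟨hT, hysq⟩ := htys
    -- c is regular on QuotSMulTop t M
    have hct : IsWeaklyRegular M [c, t] := by
      rw [isWeaklyRegular_cons_iff]
      exact ⟨hc, (isWeaklyRegular_singleton_iff _ _).mpr ht1⟩
    have htc : IsWeaklyRegular M [t, c] :=
      IsLocalRing.isWeaklyRegular_of_perm_of_subset_maximalIdeal hct
        (List.Perm.swap t c []) (by
          intro r hr
          rcases List.mem_cons.mp hr with h | h
          · rw [h]; exact hcm
          · rw [List.mem_singleton.mp h]; exact htm)
    have hcT : IsSMulRegular (QuotSMulTop t M) c := by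
      rw [isWeaklyRegular_cons_iff] at htc
      exact ((isWeaklyRegular_singleton_iff _ _).mp htc.2)
    -- apply the induction hypothesis on QuotSMulTop t M
    obtain ⟨zs', hzslen, hzsmem, hzs⟩ :=
      ih (QuotSMulTop t M) ys hyslen hysmem hysq c hcm hcT
    -- t :: c :: zs' is weakly regular on M
    have h1 : IsWeaklyRegular M (t :: c :: zs') := by
      rw [isWeaklyRegular_cons_iff]
      exact ⟨hT, hzs⟩
    have h2 : IsWeaklyRegular M (c :: t :: zs') :=
      IsLocalRing.isWeaklyRegular_of_perm_of_subset_maximalIdeal h1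
        (List.Perm.swap c t zs') (by
          intro r hr
          rcases List.mem_cons.mp hr with h | h
          · rw [h]; exact htm
          rcases List.mem_cons.mp h with h | h
          · rw [h]; exact hcm
          · exact hzsmem r h)
    refine ⟨t :: zs', by simp [hzslen], ?_, h2⟩
    intro r hr
    rcases List.mem_cons.mp hr with h | h
    · rw [h]; exact htm
    · exact hzsmem r h

end Exchange

section Dim

open Submodule IsLocalRing

universe u v

variable {R : Type u} [CommRing R]

lemma RD.map_lt_map_of_lt {I : Ideal R} {q₁ q₂ : Ideal R} (h1 : I ≤ q₁)
    (hlt : q₁ < q₂) :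
    q₁.map (Ideal.Quotient.mk I) < q₂.map (Ideal.Quotient.mk I) := by
  refine lt_of_le_of_ne (Ideal.map_mono hlt.le) ?_
  intro heq
  have hc : ∀ (q : Ideal R), I ≤ q →
      Ideal.comap (Ideal.Quotient.mk I) (q.map (Ideal.Quotient.mk I)) = q := by
    intro q hq
    rw [Ideal.comap_map_of_surjective _ Ideal.Quotient.mk_surjective]
    have : Ideal.comap (Ideal.Quotient.mk I) ⊥ = I := by
      rw [← RingHom.ker_eq_comap_bot, Ideal.mk_ker]
    rw [this, sup_eq_left.mpr hq]
  have := congrArg (Ideal.comap (Ideal.Quotient.mk I)) heq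
  rw [hc q₁ h1, hc q₂ (le_trans h1 hlt.le)] at this
  exact hlt.ne this

lemma RD.coheight_le_dim_quot (I : Ideal R) {p : Ideal R} (hp : p.IsPrime) (hIp : I ≤ p) :
    ((Order.coheight (⟨p, hp⟩ : PrimeSpectrum R) : ℕ∞) : WithBot ℕ∞)
      ≤ Order.krullDim (PrimeSpectrum (R ⧸ I)) := by
  have hmapprime : ∀ (q : PrimeSpectrum R), I ≤ q.asIdeal →
      (q.asIdeal.map (Ideal.Quotient.mk I)).IsPrime := fun q hq =>
    Ideal.map_isPrime_of_surjective Ideal.Quotient.mk_surjective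
      (by rw [Ideal.mk_ker]; exact hq)
  set p' : PrimeSpectrum (R ⧸ I) := ⟨p.map (Ideal.Quotient.mk I), hmapprime ⟨p, hp⟩ hIp⟩
    with hp'def
  have hco : Order.coheight (⟨p, hp⟩ : PrimeSpectrum R) ≤ Order.coheight p' := by
    rw [Order.coheight_le_iff]
    intro γ hhead
    have hIi : ∀ i, I ≤ (γ i).asIdeal := by
      intro i
      refine le_trans hIp (le_trans ?_ ((PrimeSpectrum.asIdeal_le_asIdeal _ _).mpr
        (γ.monotone (Fin.zero_le i))))
      exact (PrimeSpectrum.asIdeal_le_asIdeal _ _).mpr hhead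
    set δ : LTSeries (PrimeSpectrum (R ⧸ I)) :=
      ⟨γ.length, fun i => ⟨(γ i).asIdeal.map (Ideal.Quotient.mk I), hmapprime _ (hIi i)⟩,
        fun i => by
          have hstep : γ i.castSucc < γ i.succ := γ.step i
          have : (γ i.castSucc).asIdeal < (γ i.succ).asIdeal := by
            refine lt_of_le_of_ne ((PrimeSpectrum.asIdeal_le_asIdeal _ _).mpr hstep.le) ?_
            intro heq
            exact hstep.ne (PrimeSpectrum.ext heq)
          exact RD.map_lt_map_of_lt (hIi i.castSucc) this⟩ with hδdef
    have hδhead : p' ≤ δ.head := by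
      show p' ≤ (⟨(γ 0).asIdeal.map (Ideal.Quotient.mk I), _⟩ : PrimeSpectrum (R ⧸ I))
      rw [← PrimeSpectrum.asIdeal_le_asIdeal]
      exact Ideal.map_mono ((PrimeSpectrum.asIdeal_le_asIdeal _ _).mpr hhead)
    have := Order.length_le_coheight hδhead
    simpa using this
  calc ((Order.coheight (⟨p, hp⟩ : PrimeSpectrum R) : ℕ∞) : WithBot ℕ∞)
      ≤ ((Order.coheight p' : ℕ∞) : WithBot ℕ∞) := by exact_mod_cast hco
    _ ≤ Order.krullDim (PrimeSpectrum (R ⧸ I)) := Order.coheight_le_krullDim p'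

lemma RD.height_add_dim_le (I : Ideal R) (hI : I ≠ ⊤) :
    ((⨅ (p : PrimeSpectrum R) (_ : I ≤ p.asIdeal), Order.height p : ℕ∞) : WithBot ℕ∞)
      + Order.krullDim (PrimeSpectrum (R ⧸ I)) ≤ Order.krullDim (PrimeSpectrum R) := by
  have : Nontrivial (R ⧸ I) := Ideal.Quotient.nontrivial_iff.mpr hI
  have : Nontrivial R := by
    by_contra h
    rw [not_nontrivial_iff_subsingleton] at h
    exact hI (Subsingleton.elim _ _)
  rw [Order.krullDim_eq_iSup_coheight_of_nonempty (α := PrimeSpectrum (R ⧸ I)),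
    Order.krullDim_eq_iSup_height_add_coheight_of_nonempty (α := PrimeSpectrum R),
    ← WithBot.coe_add, WithBot.coe_le_coe, ENat.add_iSup]
  apply iSup_le
  intro q
  -- q corresponds to a prime of R containing I
  set p : PrimeSpectrum R := ⟨q.asIdeal.comap (Ideal.Quotient.mk I), Ideal.IsPrime.comap _⟩
    with hpdef
  have hIp : I ≤ p.asIdeal := by
    rw [hpdef]
    intro x hx
    show Ideal.Quotient.mk I x ∈ q.asIdeal
    rw [Ideal.Quotient.eq_zero_iff_mem.mpr hx]
    exact zero_mem _
  have h1 : (⨅ (p : PrimeSpectrum R) (_ : I ≤ p.asIdeal), Order.height p) ≤ Order.height p :=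
    iInf₂_le p hIp
  have h2 : Order.coheight q ≤ Order.coheight p := by
    have hsm : StrictMono (fun (x : PrimeSpectrum (R ⧸ I)) =>
        (⟨x.asIdeal.comap (Ideal.Quotient.mk I), Ideal.IsPrime.comap _⟩ : PrimeSpectrum R)) := by
      have hmono : Monotone (fun (x : PrimeSpectrum (R ⧸ I)) =>
          (⟨x.asIdeal.comap (Ideal.Quotient.mk I), Ideal.IsPrime.comap _⟩ : PrimeSpectrum R)) := by
        intro x y hxy
        rw [← PrimeSpectrum.asIdeal_le_asIdeal]
        exact Ideal.comap_mono ((PrimeSpectrum.asIdeal_le_asIdeal _ _).mpr hxy)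
      refine hmono.strictMono_of_injective ?_
      intro x y hxy
      apply PrimeSpectrum.ext
      have := congrArg PrimeSpectrum.asIdeal hxy
      simp only at this
      calc x.asIdeal = (x.asIdeal.comap (Ideal.Quotient.mk I)).map (Ideal.Quotient.mk I) :=
            (Ideal.map_comap_of_surjective _ Ideal.Quotient.mk_surjective _).symm
        _ = (y.asIdeal.comap (Ideal.Quotient.mk I)).map (Ideal.Quotient.mk I) := by rw [this]
        _ = y.asIdeal := Ideal.map_comap_of_surjective _ Ideal.Quotient.mk_surjective _
    exact Order.coheight_le_coheight_apply_of_strictMono _ hsm q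
  calc (⨅ (p : PrimeSpectrum R) (_ : I ≤ p.asIdeal), Order.height p) + Order.coheight q
      ≤ Order.height p + Order.coheight p := add_le_add h1 h2
    _ ≤ ⨆ (a : PrimeSpectrum R), Order.height a + Order.coheight a :=
        le_iSup (fun a : PrimeSpectrum R => Order.height a + Order.coheight a) p

end Dim

section Key

open Submodule IsLocalRing Pointwise

universe u v

variable {R : Type u} [CommRing R] [IsNoetherianRing R] [IsLocalRing R]

lemma RD.regular_nil (M : Type v) [AddCommGroup M] [Module R M] [Nontrivial M] :
    IsRegular M ([] : List R) := by
  refine ⟨IsWeaklyRegular.nil R M, ?_⟩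
  rw [Ideal.ofList_nil, bot_smul]
  exact fun h => bot_ne_top (α := Submodule R M) h.symm

lemma RD.key (I : Ideal R) (hI : I ≠ ⊤) :
    ∀ (n : ℕ) (M : Type v) [AddCommGroup M] [Module R M] [Module.Finite R M] [Nontrivial M]
    (rs : List R), rs.length = n → (∀ r ∈ rs, r ∈ maximalIdeal R) → IsWeaklyRegular M rs →
    ∃ (k : ℕ) (ys : List R), ys.length = k ∧ (∀ r ∈ ys, r ∈ I) ∧ IsRegular M ys ∧
      ((n : ℕ∞) : WithBot ℕ∞) ≤ ((k : ℕ∞) : WithBot ℕ∞)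
        + Order.krullDim (PrimeSpectrum (R ⧸ I)) := by
  have hqnt : Nontrivial (R ⧸ I) := Ideal.Quotient.nontrivial_iff.mpr hI
  intro n
  induction n with
  | zero =>
    intro M _ _ _ _ rs hlen hmem hreg
    refine ⟨0, [], rfl, by simp, RD.regular_nil M, ?_⟩
    have h0 : (0 : WithBot ℕ∞) ≤ Order.krullDim (PrimeSpectrum (R ⧸ I)) :=
      Order.krullDim_nonneg
    simpa using h0
  | succ n ih =>
    intro M _ _ _ _ rs hlen hmem hreg
    by_cases hex : ∃ y ∈ I, IsSMulRegular M y
    · obtain ⟨y, hyI, hy⟩ := hex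
      have hym : y ∈ maximalIdeal R := le_maximalIdeal hI hyI
      have hnt : Nontrivial (QuotSMulTop y M) := by
        rcases subsingleton_or_nontrivial (QuotSMulTop y M) with hss | hnt
        · exfalso
          have htop : (y • (⊤ : Submodule R M)) = ⊤ :=
            Submodule.Quotient.subsingleton_iff.mp hss
          have hle : (⊤ : Submodule R M) ≤ maximalIdeal R • ⊤ := by
            conv_lhs => rw [← htop]
            intro x hx
            obtain ⟨u, -, rfl⟩ : ∃ u ∈ ((⊤ : Submodule R M) : Set M), y • u = x :=
              Set.mem_smul_set.mp hx
            exact Submodule.smul_mem_smul hym Submodule.mem_top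
          have hbot := Submodule.eq_bot_of_le_smul_of_le_jacobson_bot (maximalIdeal R) ⊤
            (Module.finite_def.mp inferInstance) hle
            (by rw [IsLocalRing.jacobson_eq_maximalIdeal ⊥ bot_ne_top])
          exact bot_ne_top (α := Submodule R M) hbot.symm
        · exact hnt
      obtain ⟨zs, hzslen, hzsmem, hzs⟩ := RD.exchange n M rs hlen hmem hreg y hym hy
      rw [isWeaklyRegular_cons_iff] at hzs
      obtain ⟨-, hzsQ⟩ := hzs
      obtain ⟨k, ys, hyslen, hysI, hysreg, hle⟩ := ih (QuotSMulTop y M) zs hzslen hzsmem hzsQ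
      refine ⟨k + 1, y :: ys, by simp [hyslen], ?_, ?_, ?_⟩
      · intro r hr
        rcases List.mem_cons.mp hr with h | h
        · rw [h]; exact hyI
        · exact hysI r h
      · rw [isRegular_cons_iff]
        exact ⟨hy, hysreg⟩
      · push_cast
        calc ((n : WithBot ℕ∞) + 1)
            ≤ (((k : ℕ∞) : WithBot ℕ∞) + Order.krullDim (PrimeSpectrum (R ⧸ I))) + 1 := by
              refine add_le_add_left ?_ 1
              exact_mod_cast hle
          _ = (((k : ℕ∞) : WithBot ℕ∞) + 1) + Order.krullDim (PrimeSpectrum (R ⧸ I)) := by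
              rw [add_right_comm]
          _ = ((k : WithBot ℕ∞) + 1) + Order.krullDim (PrimeSpectrum (R ⧸ I)) := by
              norm_cast
    · push_neg at hex
      have hfin : (associatedPrimes R M).Finite := RD.associatedPrimes_finite M
      have hprime : ∀ p ∈ associatedPrimes R M, p.IsPrime := fun p hp => hp.isPrime
      have hsub : (I : Set R) ⊆ ⋃ p ∈ hfin.toFinset, ((id p : Ideal R) : Set R) := by
        intro x hx
        obtain ⟨p, hpA, hxp⟩ := RD.mem_assoc_of_not_isSMulRegular (hex x hx)
        exact Set.mem_biUnion (hfin.mem_toFinset.mpr hpA) hxp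
      obtain ⟨p, hpF, hIp⟩ := (Ideal.subset_union_prime (⊤ : Ideal R) (⊤ : Ideal R)
        (fun i hi _ _ => hprime i (hfin.mem_toFinset.mp hi))).mp hsub
      have hpA := hfin.mem_toFinset.mp hpF
      obtain ⟨hpprime, z, hz⟩ := RD.assoc_old.mp hpA
      have hz0 : z ≠ 0 := by
        rintro rfl
        apply hpprime.ne_top
        rw [hz, Ideal.eq_top_iff_one, Submodule.mem_annihilator_span_singleton, one_smul]
      have hpz : ∀ a ∈ p, a • z = 0 := by
        intro a ha
        rw [hz, Submodule.mem_annihilator_span_singleton] at ha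
        exact ha
      have hisch := RD.ischebeck (n + 1) M rs hlen hmem hreg p hpprime z hz0 hpz
      have hcomp := RD.coheight_le_dim_quot I hpprime hIp
      refine ⟨0, [], rfl, by simp, RD.regular_nil M, ?_⟩
      have hfinal : (((n + 1 : ℕ) : ℕ∞) : WithBot ℕ∞)
          ≤ Order.krullDim (PrimeSpectrum (R ⧸ I)) :=
        le_trans (WithBot.coe_le_coe.mpr hisch) hcomp
      calc (((n + 1 : ℕ) : ℕ∞) : WithBot ℕ∞) ≤ Order.krullDim (PrimeSpectrum (R ⧸ I)) := hfinal
        _ = ((0 : ℕ∞) : WithBot ℕ∞) + Order.krullDim (PrimeSpectrum (R ⧸ I)) := by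
            rw [WithBot.coe_zero, zero_add]
        _ = (((0 : ℕ) : ℕ∞) : WithBot ℕ∞) + Order.krullDim (PrimeSpectrum (R ⧸ I)) := by
            norm_cast

end Key


/-- The `I`-depth of `M`: the supremum of the lengths of `M`-regular sequences
with all entries in `I`. -/
noncomputable def idealDepth {R : Type*} [CommRing R] (M : Type*) [AddCommGroup M] [Module R M]
    (I : Ideal R) : ℕ :=
  sSup {n : ℕ | ∃ rs : List R, rs.length = n ∧ (∀ r ∈ rs, r ∈ I) ∧
    RingTheory.Sequence.IsRegular M rs}

/-- The height of an ideal: the infimum of the heights of the prime ideals containing it. -/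
noncomputable def idealHeight {R : Type*} [CommRing R] (I : Ideal R) : ℕ∞ :=
  ⨅ (p : PrimeSpectrum R) (_ : I ≤ p.asIdeal), Order.height p

/-- The Krull dimension of a commutative ring, valued in `WithBot ℕ∞`. -/
noncomputable def ringDim (R : Type*) [CommRing R] : WithBot ℕ∞ :=
  Order.krullDim (PrimeSpectrum R)

/-- For a Noetherian local ring `R` and a proper ideal `I`, one has
`depth R ≤ depth(I,R) + dim (R/I)`; in particular (using
`height I + dim (R/I) ≤ dim R`) we get `dim R − depth R ≥ height I − depth(I,R)`,
stated here in the subtraction-free form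
`height I + depth R ≤ dim R + depth(I,R)`. -/
theorem depth_le_depth_add_dim {R : Type*} [CommRing R] [IsLocalRing R] [IsNoetherianRing R]
    (I : Ideal R) (hI : I ≠ ⊤) :
    (idealDepth R (IsLocalRing.maximalIdeal R) : WithBot ℕ∞) ≤
        (idealDepth R I : WithBot ℕ∞) + ringDim (R ⧸ I) ∧
      (idealHeight I : WithBot ℕ∞) + (idealDepth R (IsLocalRing.maximalIdeal R) : WithBot ℕ∞) ≤
        ringDim R + (idealDepth R I : WithBot ℕ∞) := by
  classical
  have hqnt : Nontrivial (R ⧸ I) := Ideal.Quotient.nontrivial_iff.mpr hI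
  set Sm := {n : ℕ | ∃ rs : List R, rs.length = n ∧
    (∀ r ∈ rs, r ∈ IsLocalRing.maximalIdeal R) ∧ IsRegular R rs} with hSm
  set SI := {n : ℕ | ∃ rs : List R, rs.length = n ∧ (∀ r ∈ rs, r ∈ I) ∧ IsRegular R rs} with hSI
  have hdm : idealDepth R (IsLocalRing.maximalIdeal R) = sSup Sm := rfl
  have hdI : idealDepth R I = sSup SI := rfl
  have hsub : SI ⊆ Sm := by
    rintro n ⟨rs, h1, h2, h3⟩
    exact ⟨rs, h1, fun r hr => IsLocalRing.le_maximalIdeal hI (h2 r hr), h3⟩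
  have hdim0 : (0 : WithBot ℕ∞) ≤ ringDim (R ⧸ I) := Order.krullDim_nonneg
  have hdepthI0 : (0 : WithBot ℕ∞) ≤ (idealDepth R I : WithBot ℕ∞) := by
    exact_mod_cast (Nat.zero_le (idealDepth R I))
  have hheight_le_dim : (idealHeight I : WithBot ℕ∞) ≤ ringDim R := by
    have hIm : I ≤ (IsLocalRing.maximalIdeal R) := IsLocalRing.le_maximalIdeal hI
    have h1 : idealHeight I ≤ Order.height (⟨IsLocalRing.maximalIdeal R,
        (IsLocalRing.maximalIdeal.isMaximal R).isPrime⟩ : PrimeSpectrum R) :=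
      iInf₂_le (⟨IsLocalRing.maximalIdeal R,
        (IsLocalRing.maximalIdeal.isMaximal R).isPrime⟩ : PrimeSpectrum R) hIm
    exact le_trans (WithBot.coe_le_coe.mpr h1) (Order.height_le_krullDim _)
  by_cases hb : BddAbove Sm
  · have h0mem : (0 : ℕ) ∈ Sm := ⟨[], rfl, by simp, RD.regular_nil R⟩
    have hNmem : sSup Sm ∈ Sm := Nat.sSup_mem ⟨0, h0mem⟩ hb
    obtain ⟨rs, hlen, hmem, hreg⟩ := hNmem
    obtain ⟨k, ys, hyslen, hysI, hysreg, hle⟩ :=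
      RD.key I hI (sSup Sm) R rs hlen hmem hreg.toIsWeaklyRegular
    have hkSI : k ∈ SI := ⟨ys, hyslen, hysI, hysreg⟩
    have hk_le : (k : ℕ) ≤ idealDepth R I := by
      rw [hdI]
      exact le_csSup (BddAbove.mono hsub hb) hkSI
    have first : (idealDepth R (IsLocalRing.maximalIdeal R) : WithBot ℕ∞) ≤
        (idealDepth R I : WithBot ℕ∞) + ringDim (R ⧸ I) := by
      rw [hdm]
      calc ((sSup Sm : ℕ) : WithBot ℕ∞)
          ≤ ((k : ℕ∞) : WithBot ℕ∞) + Order.krullDim (PrimeSpectrum (R ⧸ I)) := by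
            exact_mod_cast hle
        _ ≤ (idealDepth R I : WithBot ℕ∞) + ringDim (R ⧸ I) := by
            refine add_le_add_left ?_ _
            exact_mod_cast hk_le
    refine ⟨first, ?_⟩
    calc (idealHeight I : WithBot ℕ∞) + (idealDepth R (IsLocalRing.maximalIdeal R) : WithBot ℕ∞)
        ≤ (idealHeight I : WithBot ℕ∞) + ((idealDepth R I : WithBot ℕ∞) + ringDim (R ⧸ I)) :=
          add_le_add_right first _
      _ = ((idealHeight I : WithBot ℕ∞) + ringDim (R ⧸ I)) + (idealDepth R I : WithBot ℕ∞) := by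
          rw [add_comm (idealDepth R I : WithBot ℕ∞) (ringDim (R ⧸ I)), ← add_assoc]
      _ ≤ ringDim R + (idealDepth R I : WithBot ℕ∞) := by
          refine add_le_add_left ?_ _
          exact RD.height_add_dim_le I hI
  · have hdm0 : idealDepth R (IsLocalRing.maximalIdeal R) = 0 := by
      rw [hdm, csSup_of_not_bddAbove hb, csSup_empty]
      rfl
    rw [hdm0]
    constructor
    · calc ((0 : ℕ) : WithBot ℕ∞) = 0 := by norm_cast
        _ ≤ (idealDepth R I : WithBot ℕ∞) + ringDim (R ⧸ I) := le_add_of_le_of_nonneg hdepthI0 hdim0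
    · calc (idealHeight I : WithBot ℕ∞) + ((0 : ℕ) : WithBot ℕ∞)
          = (idealHeight I : WithBot ℕ∞) := by norm_cast; exact add_zero _
        _ ≤ ringDim R := hheight_le_dim
        _ ≤ ringDim R + (idealDepth R I : WithBot ℕ∞) := le_add_of_nonneg_right hdepthI0
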